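/- Let p be an odd prime, (a_1,…,a_{p−1}) a strongly carefree tuple with m = ∏_{i=1}^{p−1} a_i^i > 1, K = ℚ(α) with α the real p-th root of m, γ_j = α^j / ∏_{i=1}^{p−1} a_i^{⌊ij/p⌋}, and suppose p² divides m^{p−1} − 1 with ε an integer satisfying εm ≡ 1 (mod p²). Set ν = (1/p)·(m + ∑_{i=1}^{p−1} ε^{i−1} α^i) and ν′ = (1/p)·(m² + ∑_{i=1}^{p−1} ε^{2(i−1)} γ_1^{2i}). Then, summing over all p field embeddings σ : K → ℂ: (a) ∑_σ σ(ν)·conj(σ(ν)) = ν′; (b) ∑_σ σ(ν) = m; and (c) for each 2 ≤ j ≤ p−1, ∑_σ σ(ν)·conj(σ(γ_j)) = ε^{j−1}·γ_j·γ_1^j. -/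

import Mathlib

open Finset

/-- A tuple `(a 1, …, a (p-1))` of positive integers is *strongly carefree* if each `a i`
is squarefree and the `a i` are pairwise coprime. -/
def StronglyCarefree (p : ℕ) (a : ℕ → ℕ) : Prop :=
  (∀ i ∈ Finset.Icc 1 (p - 1), 0 < a i ∧ Squarefree (a i)) ∧
  (∀ i ∈ Finset.Icc 1 (p - 1), ∀ j ∈ Finset.Icc 1 (p - 1), i ≠ j → Nat.Coprime (a i) (a j))

open Polynomial IntermediateField in
/-- `m = ∏ a i ^ i` with a strongly carefree tuple and `m > 1` is not a `p`-th power in `ℚ`. -/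
lemma scf_not_pth_power (p : ℕ) (hp : p.Prime) (a : ℕ → ℕ) (ha : StronglyCarefree p a)
    (m : ℕ) (hm : m = ∏ i ∈ Finset.Icc 1 (p - 1), a i ^ i) (hm1 : 1 < m) :
    ∀ b : ℚ, b ^ p ≠ (m : ℚ) := by
  intro b hb
  -- b is an integer
  have hint : IsIntegral ℤ b := by
    refine ⟨X ^ p - C (m : ℤ), monic_X_pow_sub_C _ hp.ne_zero, ?_⟩
    simp only [eval₂_sub, eval₂_X_pow, eval₂_C]
    push_cast
    rw [hb]; ring
  obtain ⟨n, hn⟩ := IsIntegrallyClosed.isIntegral_iff.mp hint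
  have hnp : n ^ p = (m : ℤ) := by
    have hb' : ((n:ℚ)) ^ p = (m : ℚ) := by
      rw [show ((n:ℚ)) = b from hn, hb]
    exact_mod_cast hb'
  have hnat : n.natAbs ^ p = m := by
    have := congrArg Int.natAbs hnp
    simpa [Int.natAbs_pow] using this
  -- find i with a i ≠ 1
  have hex : ∃ i ∈ Finset.Icc 1 (p - 1), a i ^ i ≠ 1 := by
    by_contra h
    push_neg at h
    have : m = 1 := by rw [hm]; exact Finset.prod_eq_one h
    omega
  obtain ⟨i, hi, hai⟩ := hex
  have hane : a i ≠ 1 := fun h => hai (by simp [h])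
  obtain ⟨q, hq, hqd⟩ := Nat.exists_prime_and_dvd hane
  have hapos : ∀ j ∈ Finset.Icc 1 (p - 1), a j ≠ 0 := fun j hj => (ha.1 j hj).1.ne'
  -- m.factorization q = i
  have hfact : m.factorization q = i := by
    rw [hm, Nat.factorization_prod (fun j hj => pow_ne_zero _ (hapos j hj))]
    rw [Finsupp.finset_sum_apply]
    rw [Finset.sum_eq_single_of_mem i hi]
    · rw [Nat.factorization_pow, Finsupp.smul_apply, smul_eq_mul]
      have h1 : (a i).factorization q = 1 := by
        have hle := ((ha.1 i hi).2.natFactorization_le_one q)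
        have hpos := hq.factorization_pos_of_dvd (hapos i hi) hqd
        omega
      rw [h1, mul_one]
    · intro j hj hji
      rw [Nat.factorization_pow, Finsupp.smul_apply, smul_eq_mul]
      have : ¬ q ∣ a j := by
        intro hd
        have hco := ha.2 i hi j hj (Ne.symm hji)
        have : q ∣ Nat.gcd (a i) (a j) := Nat.dvd_gcd hqd hd
        rw [hco] at this
        exact hq.one_lt.ne' (Nat.dvd_one.mp this)
      rw [Nat.factorization_eq_zero_of_not_dvd this, mul_zero]
  have hiv : 1 ≤ i ∧ i ≤ p - 1 := by simpa using hi
  have : p * (n.natAbs.factorization q) = i := by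
    rw [← hfact, ← hnat, Nat.factorization_pow, Finsupp.smul_apply, smul_eq_mul]
  have hdvd : p ∣ i := ⟨_, this.symm⟩
  have := Nat.le_of_dvd (by omega) hdvd
  have := hp.two_le
  omega

/-- Orthogonality of powers of a primitive `p`-th root of unity. -/
lemma orth_sum (p : ℕ) (hppos : 0 < p) {ζ : ℂ} (hζ : IsPrimitiveRoot ζ p)
    {i i' : ℕ} (hi : i < p) (hi' : i' < p) :
    ∑ k ∈ Finset.range p, (ζ ^ i) ^ k * ((starRingEnd ℂ) ζ ^ i') ^ k
      = if i = i' then (p : ℂ) else 0 := by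
  have hζp : ζ ^ p = 1 := hζ.pow_eq_one
  have habs : ζ * (starRingEnd ℂ) ζ = 1 := by
    have h1 : ‖ζ‖ = 1 := by
      have := congrArg (‖·‖) hζp
      rw [norm_pow, norm_one] at this
      exact (pow_left_inj₀ (norm_nonneg ζ) zero_le_one hppos.ne').mp (by rw [this, one_pow])
    rw [Complex.mul_conj, Complex.normSq_eq_norm_sq, h1]
    norm_num
  have hterm : ∀ k, (ζ ^ i) ^ k * ((starRingEnd ℂ) ζ ^ i') ^ k
      = (ζ ^ i * (starRingEnd ℂ) ζ ^ i') ^ k := fun k => (mul_pow _ _ _).symm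
  simp only [hterm]
  set w := ζ ^ i * (starRingEnd ℂ) ζ ^ i' with hw
  by_cases h : i = i'
  · subst h
    have : w = 1 := by rw [hw, ← mul_pow, habs, one_pow]
    simp [this]
  · rw [if_neg h]
    have hw1 : w ≠ 1 := by
      intro hcon
      apply h
      have : ζ ^ i = ζ ^ i' := by
        have h2 : w * ζ ^ i' = ζ ^ i := by
          rw [hw]; rw [mul_assoc, ← mul_pow, mul_comm ((starRingEnd ℂ) ζ) ζ, habs, one_pow, mul_one]
        rw [hcon, one_mul] at h2
        exact h2.symm
      exact hζ.pow_inj hi hi' this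
    have hwp : w ^ p = 1 := by
      rw [hw, mul_pow, ← pow_mul, mul_comm i p, pow_mul, hζp, one_pow, one_mul,
        ← pow_mul, mul_comm i' p, pow_mul, ← map_pow, hζp, map_one, one_pow]
    rw [geom_sum_eq hw1, hwp, sub_self, zero_div]

/-- Key orthogonality computation. -/
lemma key_sum (p : ℕ) (hppos : 0 < p) {ζ : ℂ} (hζ : IsPrimitiveRoot ζ p)
    (d : ℕ → ℂ) {j : ℕ} (hj : j < p) :
    ∑ k ∈ Finset.range p, (∑ i ∈ Finset.range p, d i * (ζ ^ i) ^ k) * ((starRingEnd ℂ) ζ ^ j) ^ k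
      = p * d j := by
  simp only [Finset.sum_mul]
  rw [Finset.sum_comm]
  have h1 : ∀ i ∈ Finset.range p,
      ∑ k ∈ Finset.range p, d i * (ζ ^ i) ^ k * ((starRingEnd ℂ) ζ ^ j) ^ k
        = if i = j then d i * p else 0 := by
    intro i hi
    simp only [mul_assoc]
    rw [← Finset.mul_sum, orth_sum p hppos hζ (Finset.mem_range.mp hi) hj]
    split <;> simp
  rw [Finset.sum_congr rfl h1, Finset.sum_ite_eq' (Finset.range p) j (fun i => d i * p)]
  rw [if_pos (Finset.mem_range.mpr hj), mul_comm]

open Polynomial IntermediateField in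
/-- Hermitian inner products involving `ν = (1/p)(m + ∑_{i=1}^{p−1} ε^(i−1) α^i)` in the
tamely ramified case: summing over all `p` complex embeddings `σ` of `K = ℚ(α)`,
(a) `∑ σ(ν)·conj(σ(ν)) = ν′`, (b) `∑ σ(ν) = m`, and
(c) `∑ σ(ν)·conj(σ(γ j)) = ε^(j−1)·γ j·(γ 1)^j` for `2 ≤ j ≤ p−1`. -/
theorem gram_entries_nu_pure_prime_degree_tame
    (p : ℕ) (hp : p.Prime) (hodd : Odd p)
    (a : ℕ → ℕ) (ha : StronglyCarefree p a)
    (m : ℕ) (hm : m = ∏ i ∈ Finset.Icc 1 (p - 1), a i ^ i) (hm1 : 1 < m)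
    (α : ℝ) (hαpos : 0 < α) (hαp : α ^ p = (m : ℝ))
    (γ : ℕ → ℝ)
    (hγ : ∀ j, γ j = α ^ j / ∏ i ∈ Finset.Icc 1 (p - 1), (a i : ℝ) ^ (i * j / p))
    (htame : p ^ 2 ∣ m ^ (p - 1) - 1)
    (ε : ℤ) (hε : (p : ℤ) ^ 2 ∣ ε * (m : ℤ) - 1)
    (ν : ℝ)
    (hν : ν = ((m : ℝ) + ∑ i ∈ Finset.Icc 1 (p - 1), (ε : ℝ) ^ (i - 1) * α ^ i) / p)
    (ν' : ℝ)
    (hν' : ν' = ((m : ℝ) ^ 2 +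
        ∑ i ∈ Finset.Icc 1 (p - 1), (ε : ℝ) ^ (2 * (i - 1)) * γ 1 ^ (2 * i)) / p)
    (K : IntermediateField ℚ ℝ) [NumberField K]
    (hK : K = IntermediateField.adjoin ℚ {α})
    (hγK : ∀ j, γ j ∈ K) (hνK : ν ∈ K) :
    (∑ σ : K →+* ℂ, σ ⟨ν, hνK⟩ * (starRingEnd ℂ) (σ ⟨ν, hνK⟩) = ((ν' : ℝ) : ℂ)) ∧
    (∑ σ : K →+* ℂ, σ ⟨ν, hνK⟩ = ((m : ℕ) : ℂ)) ∧
    (∀ j ∈ Finset.Icc 2 (p - 1),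
      ∑ σ : K →+* ℂ, σ ⟨ν, hνK⟩ * (starRingEnd ℂ) (σ ⟨γ j, hγK j⟩) =
        (((ε : ℝ) ^ (j - 1) * γ j * γ 1 ^ j : ℝ) : ℂ)) := by
  subst hK
  have hppos : 0 < p := hp.pos
  have hAlg : IsIntegral ℚ α :=
    ⟨X ^ p - C ((m : ℚ)), monic_X_pow_sub_C _ hp.ne_zero, by
      simp only [eval₂_sub, eval₂_X_pow, eval₂_C]
      rw [hαp]; simp⟩
  have hirr : Irreducible (X ^ p - C ((m : ℚ))) :=
    X_pow_sub_C_irreducible_of_prime hp (scf_not_pth_power p hp a ha m hm hm1)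
  have hmin : minpoly ℚ α = X ^ p - C ((m : ℚ)) := by
    refine (minpoly.eq_of_irreducible_of_monic hirr ?_ (monic_X_pow_sub_C _ hp.ne_zero)).symm
    simp only [map_sub, map_pow, aeval_X, aeval_C]
    rw [hαp]; simp
  have hdeg : (minpoly ℚ α).natDegree = p := by
    rw [hmin, natDegree_X_pow_sub_C]
  set K := IntermediateField.adjoin ℚ {α} with hKdef
  have hαK : α ∈ K := IntermediateField.mem_adjoin_simple_self ℚ α
  let pb : PowerBasis ℚ K := IntermediateField.adjoin.powerBasis hAlg
  set ζ : ℂ := Complex.exp (2 * Real.pi * Complex.I / p) with hζdef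
  have hζ : IsPrimitiveRoot ζ p := Complex.isPrimitiveRoot_exp p hp.ne_zero
  set α₀ : ℂ := (α : ℂ) with hα₀def
  have hα₀p : α₀ ^ p = (m : ℂ) := by rw [hα₀def]; exact_mod_cast congrArg (Complex.ofReal) hαp
  have hα₀ne : α₀ ≠ 0 := by simpa [hα₀def] using hαpos.ne'
  have haev : ∀ k : Fin p, (Polynomial.aeval ((ζ ^ (k : ℕ)) * α₀)) (minpoly ℚ pb.gen) = 0 := by
    intro k
    rw [show pb.gen = AdjoinSimple.gen ℚ α from IntermediateField.adjoin.powerBasis_gen hAlg,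
      show minpoly ℚ (AdjoinSimple.gen ℚ α) = minpoly ℚ α from IntermediateField.minpoly_gen (F := ℚ) (α := α), hmin]
    simp only [map_sub, map_pow, aeval_X, aeval_C]
    rw [mul_pow, ← pow_mul, mul_comm (k : ℕ) p, pow_mul, hζ.pow_eq_one, one_pow, one_mul, hα₀p]
    simp
  set emb : Fin p → (K →+* ℂ) := fun k => (pb.lift ((ζ ^ (k : ℕ)) * α₀) (haev k)).toRingHom
    with hembdef
  have hembα : ∀ k : Fin p, emb k ⟨α, hαK⟩ = ζ ^ (k : ℕ) * α₀ := by
    intro k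
    have hgen : (⟨α, hαK⟩ : K) = pb.gen := by
      apply Subtype.ext
      rw [show pb.gen = AdjoinSimple.gen ℚ α from IntermediateField.adjoin.powerBasis_gen hAlg]
      exact (IntermediateField.AdjoinSimple.coe_gen ℚ α).symm
    rw [hgen]
    exact pb.lift_gen _ (haev k)
  have hinj : Function.Injective emb := by
    intro k k' h
    have h2 : ζ ^ (k : ℕ) * α₀ = ζ ^ (k' : ℕ) * α₀ := by
      rw [← hembα k, ← hembα k', h]
    exact Fin.ext (hζ.pow_inj k.2 k'.2 (mul_right_cancel₀ hα₀ne h2))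
  have hbij : Function.Bijective emb := by
    rw [Fintype.bijective_iff_injective_and_card]
    refine ⟨hinj, ?_⟩
    rw [Fintype.card_fin, NumberField.Embeddings.card K ℂ,
      IntermediateField.adjoin.finrank hAlg, hdeg]
  have hpC : (p : ℂ) ≠ 0 := Nat.cast_ne_zero.mpr hp.ne_zero
  have hpR : (p : ℝ) ≠ 0 := Nat.cast_ne_zero.mpr hp.ne_zero
  have hins : Finset.range p = insert 0 (Finset.Icc 1 (p - 1)) := by
    ext x
    simp only [Finset.mem_range, Finset.mem_insert, Finset.mem_Icc]
    omega
  have h0ni : (0 : ℕ) ∉ Finset.Icc 1 (p - 1) := by simp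
  -- the coefficients
  set c' : ℕ → ℂ := fun i => if i = 0 then (m : ℂ) else (ε : ℂ) ^ (i - 1) * α₀ ^ i with hc'def
  have hc'real : ∀ i, (starRingEnd ℂ) (c' i) = c' i := by
    intro i
    rw [hc'def]
    by_cases h : i = 0 <;> simp [h, hα₀def, Complex.conj_ofReal, map_pow]
  -- the identity for ν in K
  have hpν : (p : K) * (⟨ν, hνK⟩ : K) = (m : K)
      + ∑ i ∈ Finset.Icc 1 (p - 1), (ε : K) ^ (i - 1) * (⟨α, hαK⟩ : K) ^ i := by
    apply Subtype.ext
    push_cast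
    rw [hν]
    field_simp
  have hAν : ∀ k : Fin p,
      emb k ⟨ν, hνK⟩ = (∑ i ∈ Finset.range p, c' i * (ζ ^ i) ^ (k : ℕ)) / p := by
    intro k
    have h1 := congrArg (emb k) hpν
    simp only [map_mul, map_add, map_pow, map_natCast, map_intCast, map_sum] at h1
    rw [hembα k] at h1
    rw [eq_div_iff hpC]
    rw [hins, Finset.sum_insert h0ni]
    have e0 : c' 0 * (ζ ^ 0) ^ (k : ℕ) = (m : ℂ) := by simp [hc'def]
    have e1 : ∀ i ∈ Finset.Icc 1 (p - 1),
        c' i * (ζ ^ i) ^ (k : ℕ) = (ε : ℂ) ^ (i - 1) * (ζ ^ (k : ℕ) * α₀) ^ i := by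
      intro i hi
      have hi0 : i ≠ 0 := by
        have := Finset.mem_Icc.mp hi; omega
      rw [hc'def]
      simp only [if_neg hi0, mul_pow, ← pow_mul]
      rw [Nat.mul_comm i (k : ℕ)]
      ring
    rw [e0, Finset.sum_congr rfl e1]
    linear_combination h1
  have hνconj : ∀ k : Fin p, (starRingEnd ℂ) (emb k ⟨ν, hνK⟩)
      = (∑ i ∈ Finset.range p, c' i * ((starRingEnd ℂ) ζ ^ i) ^ (k : ℕ)) / p := by
    intro k
    rw [hAν k, map_div₀, map_sum]
    congr 1
    · refine Finset.sum_congr rfl fun i _ => ?_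
      rw [map_mul, hc'real, map_pow, map_pow]
    · simp
  -- γ 1 = α
  have hγ1 : γ 1 = α := by
    rw [hγ 1]
    have he : ∀ i ∈ Finset.Icc 1 (p - 1), (a i : ℝ) ^ (i * 1 / p) = 1 := by
      intro i hi
      have := Finset.mem_Icc.mp hi
      have h2 := hp.two_le
      rw [Nat.div_eq_of_lt (by omega), pow_zero]
    rw [Finset.prod_congr rfl he]
    simp
  -- the identity for γ j in K
  have hBne : ∀ j, ((∏ i ∈ Finset.Icc 1 (p - 1), a i ^ (i * j / p) : ℕ) : ℝ) ≠ 0 := by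
    intro j
    have : 0 < ∏ i ∈ Finset.Icc 1 (p - 1), a i ^ (i * j / p) :=
      Finset.prod_pos fun i hi => pow_pos (ha.1 i hi).1 _
    positivity
  have hBcast : ∀ j, ((∏ i ∈ Finset.Icc 1 (p - 1), a i ^ (i * j / p) : ℕ) : ℝ)
      = ∏ i ∈ Finset.Icc 1 (p - 1), (a i : ℝ) ^ (i * j / p) := by
    intro j
    push_cast
    rfl
  have hγR : ∀ j, γ j = α ^ j / ((∏ i ∈ Finset.Icc 1 (p - 1), a i ^ (i * j / p) : ℕ) : ℝ) := by
    intro j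
    rw [hγ j, hBcast j]
  have hγα : ∀ j, ((∏ i ∈ Finset.Icc 1 (p - 1), a i ^ (i * j / p) : ℕ) : K) * ⟨γ j, hγK j⟩
      = (⟨α, hαK⟩ : K) ^ j := by
    intro j
    apply Subtype.ext
    push_cast
    rw [hγ j, ← hBcast j, mul_div_assoc', mul_div_cancel_left₀ _ (hBne j)]
  have hγemb : ∀ j, ∀ k : Fin p, emb k ⟨γ j, hγK j⟩
      = (ζ ^ j) ^ (k : ℕ) * α₀ ^ j / ((∏ i ∈ Finset.Icc 1 (p - 1), a i ^ (i * j / p) : ℕ) : ℂ) := by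
    intro j k
    have h1 := congrArg (emb k) (hγα j)
    simp only [map_mul, map_pow, map_natCast] at h1
    rw [hembα k] at h1
    have hBC : ((∏ i ∈ Finset.Icc 1 (p - 1), a i ^ (i * j / p) : ℕ) : ℂ) ≠ 0 := by
      have := hBne j
      exact_mod_cast fun h => this (by exact_mod_cast h)
    rw [eq_div_iff hBC]
    rw [mul_pow, ← pow_mul, mul_comm (k : ℕ) j, pow_mul] at h1
    linear_combination h1
  have hγconj : ∀ j, ∀ k : Fin p, (starRingEnd ℂ) (emb k ⟨γ j, hγK j⟩)
      = ((starRingEnd ℂ) ζ ^ j) ^ (k : ℕ) * α₀ ^ j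
        / ((∏ i ∈ Finset.Icc 1 (p - 1), a i ^ (i * j / p) : ℕ) : ℂ) := by
    intro j k
    rw [hγemb j k, map_div₀, map_mul, map_pow, map_pow, map_pow]
    rw [hα₀def]
    simp [Complex.conj_ofReal]
  -- part (b)
  have partb : ∑ σ : K →+* ℂ, σ ⟨ν, hνK⟩ = ((m : ℕ) : ℂ) := by
    have hsum : ∑ σ : K →+* ℂ, σ ⟨ν, hνK⟩ = ∑ k : Fin p, emb k ⟨ν, hνK⟩ :=
      (Fintype.sum_bijective emb hbij _ _ (fun k => rfl)).symm
    rw [hsum]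
    have e1 : ∀ k : Fin p, emb k ⟨ν, hνK⟩
        = (∑ i ∈ Finset.range p, c' i * (ζ ^ i) ^ (k : ℕ))
          * ((starRingEnd ℂ) ζ ^ 0) ^ (k : ℕ) / p := by
      intro k
      rw [hAν k]
      simp
    rw [Finset.sum_congr rfl (fun k _ => e1 k)]
    rw [Fin.sum_univ_eq_sum_range (fun k => (∑ i ∈ Finset.range p, c' i * (ζ ^ i) ^ k)
      * ((starRingEnd ℂ) ζ ^ 0) ^ k / p)]
    rw [← Finset.sum_div, key_sum p hppos hζ c' hppos]
    rw [hc'def]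
    simp only [if_pos rfl, ↓reduceIte]
    field_simp
  refine ⟨?_, partb, ?_⟩
  · -- part (a)
    have hsum : ∑ σ : K →+* ℂ, σ ⟨ν, hνK⟩ * (starRingEnd ℂ) (σ ⟨ν, hνK⟩)
        = ∑ k : Fin p, emb k ⟨ν, hνK⟩ * (starRingEnd ℂ) (emb k ⟨ν, hνK⟩) :=
      (Fintype.sum_bijective emb hbij _ _ (fun k => rfl)).symm
    rw [hsum]
    have e1 : ∀ k : Fin p, emb k ⟨ν, hνK⟩ * (starRingEnd ℂ) (emb k ⟨ν, hνK⟩)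
        = (∑ i ∈ Finset.range p, c' i * (ζ ^ i) ^ (k : ℕ))
          * (∑ i ∈ Finset.range p, c' i * ((starRingEnd ℂ) ζ ^ i) ^ (k : ℕ)) / (p * p) := by
      intro k
      rw [hνconj k, hAν k]
      rw [div_mul_div_comm]
    rw [Finset.sum_congr rfl (fun k _ => e1 k)]
    rw [Fin.sum_univ_eq_sum_range (fun k => (∑ i ∈ Finset.range p, c' i * (ζ ^ i) ^ k)
      * (∑ i ∈ Finset.range p, c' i * ((starRingEnd ℂ) ζ ^ i) ^ k) / (p * p))]
    rw [← Finset.sum_div]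
    have hT : ∑ k ∈ Finset.range p, (∑ i ∈ Finset.range p, c' i * (ζ ^ i) ^ k)
        * (∑ i ∈ Finset.range p, c' i * ((starRingEnd ℂ) ζ ^ i) ^ k)
        = ∑ i ∈ Finset.range p, c' i * (p * c' i) := by
      have step1 : ∀ k ∈ Finset.range p, (∑ i ∈ Finset.range p, c' i * (ζ ^ i) ^ k)
          * (∑ i ∈ Finset.range p, c' i * ((starRingEnd ℂ) ζ ^ i) ^ k)
          = ∑ i ∈ Finset.range p,
              c' i * ((∑ i' ∈ Finset.range p, c' i' * (ζ ^ i') ^ k)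
                * ((starRingEnd ℂ) ζ ^ i) ^ k) := by
        intro k _
        rw [Finset.mul_sum]
        exact Finset.sum_congr rfl fun i _ => by ring
      rw [Finset.sum_congr rfl step1, Finset.sum_comm]
      refine Finset.sum_congr rfl fun i hi => ?_
      rw [← Finset.mul_sum, key_sum p hppos hζ c' (Finset.mem_range.mp hi)]
    have hc2 : ∑ i ∈ Finset.range p, c' i * ((p : ℂ) * c' i)
        = p * ((m : ℂ) ^ 2 + ∑ i ∈ Finset.Icc 1 (p - 1),
            (ε : ℂ) ^ (2 * (i - 1)) * α₀ ^ (2 * i)) := by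
      rw [hins, Finset.sum_insert h0ni, mul_add]
      congr 1
      · rw [hc'def]; simp; ring
      · rw [Finset.mul_sum]
        refine Finset.sum_congr rfl fun i hi => ?_
        have hi0 : i ≠ 0 := by have := Finset.mem_Icc.mp hi; omega
        rw [hc'def]
        simp only [if_neg hi0]
        rw [two_mul, two_mul, pow_add, pow_add]
        ring
    have hRHSa : ((ν' : ℝ) : ℂ) = ((m : ℂ) ^ 2 + ∑ i ∈ Finset.Icc 1 (p - 1),
        (ε : ℂ) ^ (2 * (i - 1)) * α₀ ^ (2 * i)) / p := by
      rw [hν', hγ1, hα₀def]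
      push_cast
      ring
    rw [hT, hc2, hRHSa, mul_div_mul_left _ _ hpC]
  · -- part (c)
    intro j hj
    have hjm := Finset.mem_Icc.mp hj
    have hjp : j < p := by have := hp.two_le; omega
    have hj0 : j ≠ 0 := by omega
    have hsum : ∑ σ : K →+* ℂ, σ ⟨ν, hνK⟩ * (starRingEnd ℂ) (σ ⟨γ j, hγK j⟩)
        = ∑ k : Fin p, emb k ⟨ν, hνK⟩ * (starRingEnd ℂ) (emb k ⟨γ j, hγK j⟩) :=
      (Fintype.sum_bijective emb hbij _ _ (fun k => rfl)).symm
    rw [hsum]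
    set B : ℂ := ((∏ i ∈ Finset.Icc 1 (p - 1), a i ^ (i * j / p) : ℕ) : ℂ) with hBdef
    have hBC : B ≠ 0 := by
      have := hBne j
      rw [hBdef]
      exact_mod_cast fun h => this (by exact_mod_cast h)
    have e1 : ∀ k : Fin p, emb k ⟨ν, hνK⟩ * (starRingEnd ℂ) (emb k ⟨γ j, hγK j⟩)
        = (∑ i ∈ Finset.range p, c' i * (ζ ^ i) ^ (k : ℕ))
          * ((starRingEnd ℂ) ζ ^ j) ^ (k : ℕ) * (α₀ ^ j / (p * B)) := by
      intro k
      rw [hAν k, hγconj j k]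
      ring
    rw [Finset.sum_congr rfl (fun k _ => e1 k)]
    rw [Fin.sum_univ_eq_sum_range (fun k => (∑ i ∈ Finset.range p, c' i * (ζ ^ i) ^ k)
      * ((starRingEnd ℂ) ζ ^ j) ^ k * (α₀ ^ j / (p * B)))]
    rw [← Finset.sum_mul, key_sum p hppos hζ c' hjp]
    rw [hc'def]
    simp only [if_neg hj0]
    have hRHSc : (((ε : ℝ) ^ (j - 1) * γ j * γ 1 ^ j : ℝ) : ℂ)
        = (ε : ℂ) ^ (j - 1) * (α₀ ^ j / B) * α₀ ^ j := by
      rw [hγR j, hγ1, hBdef, hα₀def]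
      push_cast
      ring
    rw [hRHSc]
    field_simp
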